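/- Let A be a matrix of the form A = I + α(γ·W·P·Π − W) acting on ℝ^n, where W is diagonal with diagonal entries in [ω_min, ω_max] ⊂ (0,1), P·Π is row-substochastic with nonnegative entries and row sums at most 1, γ ∈ [0,1), and α ∈ (0, 1/(ω_max)]. Then the induced sup-norm of A satisfies ‖A‖_∞ ≤ 1 − α·ω_min·(1−γ). -/
import Mathlib


open Finset Matrix

/-- Sup-norm bound for the switching-system matrix
A = I + α(γ W M − W), where W = diag(ω) with ω_i ∈ [ω_min, ω_max] ⊂ (0,1),
M (= P·Π) is nonnegative with row sums at most 1, γ ∈ [0,1), and α ∈ (0, 1/ω_max].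
Then the induced sup norm satisfies max_i Σ_j |A_{ij}| ≤ 1 − α ω_min (1−γ). -/
theorem switching_matrix_sup_norm_bound
    (n : ℕ) (hn : 0 < n)
    (ω : Fin n → ℝ) (ωmin ωmax : ℝ)
    (hωmin : 0 < ωmin) (hωle : ωmin ≤ ωmax) (hωmax : ωmax < 1)
    (hω : ∀ i, ωmin ≤ ω i ∧ ω i ≤ ωmax)
    (M : Matrix (Fin n) (Fin n) ℝ)
    (hMnn : ∀ i j, 0 ≤ M i j) (hMrow : ∀ i, ∑ j, M i j ≤ 1)
    (γ α : ℝ) (hγ0 : 0 ≤ γ) (hγ1 : γ < 1) (hα0 : 0 < α) (hα1 : α * ωmax ≤ 1)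
    (A : Matrix (Fin n) (Fin n) ℝ)
    (hA : A = 1 + α • (γ • (Matrix.diagonal ω * M) - Matrix.diagonal ω)) :
    ∀ i, ∑ j, |A i j| ≤ 1 - α * ωmin * (1 - γ) := by
  intro i
  obtain ⟨h1, h2⟩ := hω i
  have hAij : ∀ j, A i j = (if i = j then (1:ℝ) else 0) +
      α * (γ * (ω i * M i j) - (if i = j then ω i else 0)) := by
    intro j
    simp [hA, Matrix.add_apply, Matrix.one_apply, Matrix.sub_apply,
      Matrix.diagonal_mul, Matrix.diagonal_apply, smul_eq_mul, mul_assoc]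
  have hnn : ∀ j, 0 ≤ A i j := by
    intro j
    rw [hAij j]
    by_cases h : i = j
    · subst h
      simp only [eq_self_iff_true, if_true]
      have hM := hMnn i i
      nlinarith [mul_nonneg (mul_nonneg hα0.le hγ0) (mul_nonneg (by linarith : (0:ℝ) ≤ ω i) hM)]
    · simp only [if_neg h]
      have hM := hMnn i j
      nlinarith [mul_nonneg (mul_nonneg hα0.le hγ0) (mul_nonneg (by linarith : (0:ℝ) ≤ ω i) hM)]
  have habs : ∑ j, |A i j| = ∑ j, A i j := by
    exact Finset.sum_congr rfl fun j _ => abs_of_nonneg (hnn j)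
  rw [habs]
  have hAij2 : ∀ j, A i j = (if i = j then (1 - α * ω i) else 0) + α * γ * ω i * M i j := by
    intro j
    rw [hAij]
    by_cases h : i = j <;> simp [h] <;> ring
  have hsum : ∑ j, A i j = (1 - α * ω i) + α * γ * ω i * ∑ j, M i j := by
    simp only [hAij2, Finset.sum_add_distrib, Finset.sum_ite_eq, Finset.mem_univ, if_pos,
      ← Finset.mul_sum]
  rw [hsum]
  have hMnn' : (0:ℝ) ≤ ∑ j, M i j := Finset.sum_nonneg fun j _ => hMnn i j
  have hMr := hMrow i
  nlinarith [mul_nonneg (mul_nonneg hα0.le hγ0) (mul_nonneg (by linarith : (0:ℝ) ≤ ω i) (by linarith : (0:ℝ) ≤ 1 - ∑ j, M i j)), mul_nonneg hα0.le (mul_nonneg (by linarith : (0:ℝ) ≤ 1-γ) (by linarith : (0:ℝ) ≤ ω i - ωmin))]
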